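/- For positive integers m, n, k with 1 ≤ k ≤ n−2, one has Ā_m^k A_m^{n−k} − Ā_m^{k+2} A_m^{n−k−2} = Ā_m^{k+1} v_{m,1} u_m^T A_m^{n−k−2}, where A_m is the m×m unit-primitive matrix with entries a_{ij} = [i+j ≤ m+1], X_m is the m×m anti-identity matrix (1's on the antidiagonal), Ā_m = A_m − X_m, u_m is the all-ones column vector, and v_{m,1} is the first standard unit column vector. -/

import Mathlib

open Matrix

/-- The `m × m` unit-primitive matrix: entry `(i,j)` (1-based) is 1 iff `i + j ≤ m + 1`. -/
def A (m : ℕ) : Matrix (Fin m) (Fin m) ℝ :=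
  Matrix.of fun i j => if (i : ℕ) + (j : ℕ) + 1 ≤ m then 1 else 0

/-- The `m × m` anti-identity matrix: entry `(i,j)` (1-based) is 1 iff `i + j = m + 1`. -/
def X (m : ℕ) : Matrix (Fin m) (Fin m) ℝ :=
  Matrix.of fun i j => if (i : ℕ) + (j : ℕ) + 1 = m then 1 else 0

/-- `Ā_m = A_m - X_m`. -/
def Abar (m : ℕ) : Matrix (Fin m) (Fin m) ℝ := A m - X m

/-- The rank-one matrix `v_{m,1} u_m^T`: entry `(i,j)` is 1 iff `i = 1` (1-based). -/
def VU (m : ℕ) : Matrix (Fin m) (Fin m) ℝ :=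
  Matrix.of fun i _ => if (i : ℕ) = 0 then 1 else 0

lemma sum_single {m : ℕ} (c : Fin m) (f : Fin m → ℝ) (h : ∀ l, l ≠ c → f l = 0) :
    ∑ l, f l = f c :=
  Finset.sum_eq_single c (fun b _ hb => h b hb) (by simp)

lemma Abar_apply (m : ℕ) (i j : Fin m) :
    Abar m i j = if (i : ℕ) + (j : ℕ) + 2 ≤ m then 1 else 0 := by
  have hi := i.isLt; have hj := j.isLt
  simp only [Abar, A, X, Matrix.sub_apply, of_apply]
  split_ifs <;> norm_num <;> omega

lemma D_eq (m : ℕ) (hm : 0 < m) :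
    A m * A m - Abar m * Abar m - Abar m * VU m =
      (Matrix.of fun i _ => if (i : ℕ) = m - 1 then (1 : ℝ) else 0 : Matrix (Fin m) (Fin m) ℝ) := by
  have hAA : A m * A m - Abar m * Abar m = A m * X m + X m * A m - X m * X m := by
    simp only [Abar]; noncomm_ring
  rw [hAA]
  ext i j
  have hi := i.isLt; have hj := j.isLt
  have hAX : (A m * X m) i j = if (i : ℕ) ≤ (j : ℕ) then 1 else 0 := by
    rw [mul_apply, sum_single ⟨m - 1 - j, by omega⟩]
    · simp only [A, X, of_apply, Fin.val_mk]
      split_ifs <;> norm_num <;> omega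
    · intro l hl
      have hlv : (l : ℕ) ≠ m - 1 - j := by simpa [Fin.ext_iff] using hl
      have := l.isLt
      simp only [A, X, of_apply]
      rw [if_neg (show ¬((l:ℕ) + (j:ℕ) + 1 = m) by omega)]; ring
  have hXA : (X m * A m) i j = if (j : ℕ) ≤ (i : ℕ) then 1 else 0 := by
    rw [mul_apply, sum_single ⟨m - 1 - i, by omega⟩]
    · simp only [A, X, of_apply, Fin.val_mk]
      split_ifs <;> norm_num <;> omega
    · intro l hl
      have hlv : (l : ℕ) ≠ m - 1 - i := by simpa [Fin.ext_iff] using hl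
      have := l.isLt
      simp only [A, X, of_apply]
      rw [if_neg (show ¬((i:ℕ) + (l:ℕ) + 1 = m) by omega)]; ring
  have hXX : (X m * X m) i j = if (i : ℕ) = (j : ℕ) then 1 else 0 := by
    rw [mul_apply, sum_single ⟨m - 1 - i, by omega⟩]
    · simp only [X, of_apply, Fin.val_mk]
      split_ifs <;> norm_num <;> omega
    · intro l hl
      have hlv : (l : ℕ) ≠ m - 1 - i := by simpa [Fin.ext_iff] using hl
      have := l.isLt
      simp only [X, of_apply]
      rw [if_neg (show ¬((i:ℕ) + (l:ℕ) + 1 = m) by omega)]; ring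
  have hAV : (Abar m * VU m) i j = if (i : ℕ) + 2 ≤ m then 1 else 0 := by
    rw [mul_apply, sum_single ⟨0, hm⟩]
    · rw [Abar_apply]
      simp [VU]
    · intro l hl
      have : (l : ℕ) ≠ 0 := by simpa [Fin.ext_iff] using hl
      simp [VU, this]
  simp only [Matrix.sub_apply, Matrix.add_apply, hAX, hXA, hXX, hAV, of_apply]
  split_ifs <;> norm_num <;> omega

lemma key (m : ℕ) (hm : 0 < m) :
    Abar m * (A m * A m) - Abar m * (Abar m * Abar m) - Abar m * (Abar m * VU m) = 0 := by
  have : Abar m * (A m * A m) - Abar m * (Abar m * Abar m) - Abar m * (Abar m * VU m)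
      = Abar m * (A m * A m - Abar m * Abar m - Abar m * VU m) := by noncomm_ring
  rw [this, D_eq m hm]
  ext i j
  rw [Matrix.zero_apply, mul_apply, sum_single ⟨m - 1, by omega⟩]
  · rw [Abar_apply]
    have := i.isLt
    simp only [of_apply, if_pos rfl, Fin.val_mk]
    rw [if_neg (show ¬((i:ℕ) + (m - 1) + 2 ≤ m) by omega)]; ring
  · intro l hl
    have hlv : (l : ℕ) ≠ m - 1 := by simpa [Fin.ext_iff] using hl
    simp only [of_apply, Abar_apply]
    rw [if_neg hlv]; ring

/-- For positive integers `m, n, k` with `1 ≤ k ≤ n - 2`: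
`Ā_m^k A_m^{n-k} - Ā_m^{k+2} A_m^{n-k-2} = Ā_m^{k+1} v_{m,1} u_m^T A_m^{n-k-2}`. -/
theorem Abar_pow_mul_A_pow_sub (m n k : ℕ) (hm : 0 < m) (hn : 0 < n) (hk : 1 ≤ k) (hkn : k ≤ n - 2) :
    Abar m ^ k * A m ^ (n - k) - Abar m ^ (k + 2) * A m ^ (n - k - 2) =
      Abar m ^ (k + 1) * VU m * A m ^ (n - k - 2) := by
  have hn3 : 3 ≤ n := by omega
  have hnk : n - k = (n - k - 2) + 2 := by omega
  obtain ⟨k', rfl⟩ : ∃ k', k = k' + 1 := ⟨k - 1, by omega⟩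
  rw [hnk]
  have e1 : A m ^ (n - (k' + 1) - 2 + 2) = A m * A m * A m ^ (n - (k' + 1) - 2) := by
    rw [show n - (k' + 1) - 2 + 2 = 2 + (n - (k' + 1) - 2) from by omega, pow_add, sq]
  rw [e1]
  have e2 : Abar m ^ (k' + 1) = Abar m ^ k' * Abar m := by rw [pow_succ]
  have e3 : Abar m ^ (k' + 1 + 2) = Abar m ^ k' * (Abar m * (Abar m * Abar m)) := by
    rw [show k' + 1 + 2 = k' + 3 from rfl, pow_add, pow_succ, sq, mul_assoc]
  have e4 : Abar m ^ (k' + 1 + 1) = Abar m ^ k' * (Abar m * Abar m) := by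
    rw [pow_succ, pow_succ, mul_assoc]
  rw [e2, e3, e4]
  have := key m hm
  have goal : Abar m ^ k' * Abar m * (A m * A m) - Abar m ^ k' * (Abar m * (Abar m * Abar m))
      - Abar m ^ k' * (Abar m * Abar m) * VU m = 0 := by
    calc _ = Abar m ^ k' * (Abar m * (A m * A m) - Abar m * (Abar m * Abar m)
        - Abar m * (Abar m * VU m)) := by noncomm_ring
    _ = 0 := by rw [this, mul_zero]
  have goal' : Abar m ^ k' * Abar m * (A m * A m) - Abar m ^ k' * (Abar m * (Abar m * Abar m))
      = Abar m ^ k' * (Abar m * Abar m) * VU m := sub_eq_zero.mp goal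
  calc Abar m ^ k' * Abar m * (A m * A m * A m ^ (n - (k' + 1) - 2))
      - Abar m ^ k' * (Abar m * (Abar m * Abar m)) * A m ^ (n - (k' + 1) - 2)
      = (Abar m ^ k' * Abar m * (A m * A m) - Abar m ^ k' * (Abar m * (Abar m * Abar m)))
        * A m ^ (n - (k' + 1) - 2) := by noncomm_ring
    _ = Abar m ^ k' * (Abar m * Abar m) * VU m * A m ^ (n - (k' + 1) - 2) := by
        rw [goal']
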